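/- Let (wₙ) be a sequence of nonzero vectors in ℝ² whose directions converge to a unit vector ϑ, with ‖wₙ‖ → ∞, and such that |wₙ × wₙ₊₁| ≤ M for a fixed constant M and all n. Suppose also the angle between wₙ and ϑ is at most twice the angle between wₙ and wₙ₊₁. Then hₙ → 0, where hₙ is the component of wₙ perpendicular to ϑ (i.e., hₙ = |wₙ × ϑ|). -/

import Mathlib

open Filter InnerProductGeometry

/-- The cross product of two planar vectors. -/
def cross (v w : EuclideanSpace ℝ (Fin 2)) : ℝ := v 0 * w 1 - v 1 * w 0

lemma inner_eq2 (x y : EuclideanSpace ℝ (Fin 2)) :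
    (inner ℝ x y : ℝ) = x 0 * y 0 + x 1 * y 1 := by
  simp [PiLp.inner_apply, Fin.sum_univ_two, RCLike.inner_apply, mul_comm]

lemma sin_angle_eq_cross (x y : EuclideanSpace ℝ (Fin 2)) :
    Real.sin (angle x y) * (‖x‖ * ‖y‖) = |cross x y| := by
  rw [sin_angle_mul_norm_mul_norm]
  have : (inner ℝ x x : ℝ) * (inner ℝ y y : ℝ) - (inner ℝ x y : ℝ) * (inner ℝ x y : ℝ)
      = (cross x y) ^ 2 := by
    simp only [inner_eq2, cross]; ring
  rw [this, Real.sqrt_sq_eq_abs]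

/-- if the directions of `wₙ` converge to a unit vector `ϑ`, `‖wₙ‖ → ∞`,
`|wₙ × wₙ₊₁| ≤ M`, and `angle(wₙ, ϑ) ≤ 2·angle(wₙ, wₙ₊₁)`, then the perpendicular
components `hₙ = |wₙ × ϑ|` tend to `0`. -/
theorem stmt_5 (w : ℕ → EuclideanSpace ℝ (Fin 2)) (ϑ : EuclideanSpace ℝ (Fin 2))
    (hθ : ‖ϑ‖ = 1) (hne : ∀ n, w n ≠ 0)
    (hdir : Tendsto (fun n => (‖w n‖)⁻¹ • w n) atTop (nhds ϑ))
    (hnorm : Tendsto (fun n => ‖w n‖) atTop atTop)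
    (M : ℝ) (hM : ∀ n, |cross (w n) (w (n + 1))| ≤ M)
    (hang : ∀ n, angle (w n) ϑ ≤ 2 * angle (w n) (w (n + 1))) :
    Tendsto (fun n => |cross (w n) ϑ|) atTop (nhds 0) := by
  set u : ℕ → EuclideanSpace ℝ (Fin 2) := fun n => (‖w n‖)⁻¹ • w n with hu
  have hnu : ∀ n, ‖u n‖ = 1 := by
    intro n
    simp [hu, norm_smul, abs_of_nonneg (inv_nonneg.2 (norm_nonneg _)),
      inv_mul_cancel₀ (norm_ne_zero_iff.2 (hne n))]
  have hau : ∀ n, angle (u n) (u (n + 1)) = angle (w n) (w (n + 1)) := by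
    intro n
    rw [hu]
    rw [angle_smul_left_of_pos, angle_smul_right_of_pos] <;>
      exact inv_pos.2 (norm_pos_iff.2 (hne _))
  -- the angle between consecutive terms tends to 0
  have hinner : Tendsto (fun n => (inner ℝ (u n) (u (n + 1)) : ℝ)) atTop (nhds 1) := by
    have h2 : Tendsto (fun n => u (n + 1)) atTop (nhds ϑ) :=
      hdir.comp (tendsto_add_atTop_nat 1)
    have h3 := (Tendsto.inner (𝕜 := ℝ) hdir h2)
    have h1 : (inner ℝ ϑ ϑ : ℝ) = 1 := by
      rw [real_inner_self_eq_norm_sq, hθ]; norm_num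
    rw [← h1]; exact h3
  have halpha : Tendsto (fun n => angle (w n) (w (n + 1))) atTop (nhds 0) := by
    have : Tendsto (fun n => angle (u n) (u (n + 1))) atTop (nhds 0) := by
      have : Tendsto (fun n => Real.arccos (inner ℝ (u n) (u (n + 1)) : ℝ)) atTop
          (nhds (Real.arccos 1)) :=
        (Real.continuous_arccos.continuousAt).tendsto.comp hinner
      simpa [InnerProductGeometry.angle, hnu, Real.arccos_one] using this
    simpa [hau] using this
  -- eventually the angle is small
  have hsmall : ∀ᶠ n in atTop, angle (w n) (w (n + 1)) ≤ Real.pi / 2 := by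
    have := halpha.eventually (eventually_le_nhds (by positivity :
      (0:ℝ) < Real.pi / 2))
    exact this
  have hposn : ∀ n, (0:ℝ) < ‖w n‖ := fun n => norm_pos_iff.2 (hne n)
  -- main bound
  have key : ∀ᶠ n in atTop, |cross (w n) ϑ| ≤ Real.pi * M / ‖w (n + 1)‖ := by
    filter_upwards [hsmall] with n hs
    set α := angle (w n) (w (n + 1)) with hα
    set θ := angle (w n) ϑ with hθn
    have hθsin : |cross (w n) ϑ| = Real.sin θ * ‖w n‖ := by
      rw [← sin_angle_eq_cross, hθ, mul_one]
    have h1 : Real.sin θ ≤ θ := Real.sin_le (angle_nonneg _ _)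
    have h2 : θ ≤ 2 * α := hang n
    have h3 : 2 / Real.pi * α ≤ Real.sin α := Real.mul_le_sin (angle_nonneg _ _) hs
    have hsinα : Real.sin α * (‖w n‖ * ‖w (n + 1)‖) ≤ M := by
      rw [sin_angle_eq_cross]; exact hM n
    have hπ : (0:ℝ) < Real.pi := Real.pi_pos
    have hsin : Real.sin θ ≤ Real.pi * Real.sin α := by
      calc Real.sin θ ≤ 2 * α := h1.trans h2
        _ = Real.pi * (2 / Real.pi * α) := by field_simp
        _ ≤ Real.pi * Real.sin α := by nlinarith
    calc |cross (w n) ϑ| = Real.sin θ * ‖w n‖ := hθsin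
      _ ≤ Real.pi * Real.sin α * ‖w n‖ := by
          nlinarith [(hposn n), Real.sin_nonneg_of_nonneg_of_le_pi
            (angle_nonneg (w n) ϑ) (angle_le_pi (w n) ϑ)]
      _ = Real.pi * (Real.sin α * (‖w n‖ * ‖w (n+1)‖)) / ‖w (n+1)‖ := by
          rw [eq_div_iff (hposn (n+1)).ne']; ring
      _ ≤ Real.pi * M / ‖w (n + 1)‖ := by
          have := hsinα
          gcongr
  -- the bound tends to 0
  have hbound : Tendsto (fun n => Real.pi * M / ‖w (n + 1)‖) atTop (nhds 0) :=
    Tendsto.div_atTop tendsto_const_nhds (hnorm.comp (tendsto_add_atTop_nat 1))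
  have hlow : ∀ᶠ n in atTop, (0:ℝ) ≤ |cross (w n) ϑ| :=
    Eventually.of_forall fun n => abs_nonneg _
  exact tendsto_of_tendsto_of_tendsto_of_le_of_le' tendsto_const_nhds hbound hlow key
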